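/- On the polynomial ring ℝ[t_1, t_2, …] (multivariate polynomials with variables indexed by positive naturals), define for each natural number k the linear operator L_k by L_k f = ∂f/∂t_k − Σ_{n≥1} n·t_n·∂f/∂t_{n+k} (the sum is finite on every polynomial, since only finitely many partial derivatives of f are nonzero). Then for all natural numbers a and b and every polynomial f, L_a(L_b f) − L_b(L_a f) = (b − a)·L_{a+b} f. -/

import Mathlib

open MvPolynomial

/-- Partial derivative `∂/∂t_k` on `ℝ[t_1, t_2, …]` (variables indexed by `ℕ+`),
with the convention that `∂/∂t_0 = 0`. -/
noncomputable def partialT (k : ℕ) (f : MvPolynomial ℕ+ ℝ) : MvPolynomial ℕ+ ℝ :=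
  if h : 0 < k then pderiv (⟨k, h⟩ : ℕ+) f else 0

/-- The Virasoro-type operator `L_k f = ∂f/∂t_k - ∑_{n≥1} n·t_n·∂f/∂t_{n+k}`
(the sum is finite on every polynomial). -/
noncomputable def virasoroL (k : ℕ) (f : MvPolynomial ℕ+ ℝ) : MvPolynomial ℕ+ ℝ :=
  partialT k f - ∑ᶠ n : ℕ+, ((n : ℕ) : MvPolynomial ℕ+ ℝ) * X n * partialT ((n : ℕ) + k) f

namespace Stmt16Aux

abbrev PP := MvPolynomial ℕ+ ℝ

lemma natCast_eq_C (n : ℕ) : ((n : PP)) = C (n : ℝ) := by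
  rw [map_natCast (C : ℝ →+* PP) n]

lemma pderiv_comm' (i j : ℕ+) (f : PP) : pderiv i (pderiv j f) = pderiv j (pderiv i f) := by
  induction f using MvPolynomial.induction_on' with
  | monomial s a =>
    simp only [pderiv_monomial]
    have hE : (s - Finsupp.single j 1) - Finsupp.single i 1
        = (s - Finsupp.single i 1) - Finsupp.single j 1 := by
      ext k
      simp only [Finsupp.tsub_apply, Finsupp.single_apply]
      split_ifs <;> omega
    have hC : s j * (((s - Finsupp.single j 1) : ℕ+ →₀ ℕ) i)
        = s i * (((s - Finsupp.single i 1) : ℕ+ →₀ ℕ) j) := by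
      simp only [Finsupp.tsub_apply, Finsupp.single_apply]
      by_cases h : i = j
      · subst h; ring
      · rw [if_neg h, if_neg (fun hh => h hh.symm)]
        simp [Nat.mul_comm]
    rw [hE]
    congr 1
    rw [mul_assoc, mul_assoc, ← Nat.cast_mul, ← Nat.cast_mul, hC]
  | add p q hp hq => simp [hp, hq]

lemma coe_toPNat (k : ℕ) (h : 0 < k) : ((k.toPNat h : ℕ+) : ℕ) = k := rfl

lemma partialT_pos (k : ℕ) (h : 0 < k) (f : PP) :
    partialT k f = pderiv (k.toPNat h) f := by
  exact dif_pos h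

lemma partialT_neg (k : ℕ) (h : ¬ 0 < k) (f : PP) : partialT k f = 0 :=
  dif_neg h

lemma partialT_zero_op (f : PP) : partialT 0 f = 0 := dif_neg (lt_irrefl 0)

lemma partialT_map_zero (k : ℕ) : partialT k (0 : PP) = 0 := by
  by_cases h : 0 < k
  · rw [partialT_pos k h, map_zero]
  · rw [partialT_neg k h]

lemma partialT_sub (k : ℕ) (f g : PP) : partialT k (f - g) = partialT k f - partialT k g := by
  by_cases h : 0 < k
  · rw [partialT_pos k h, partialT_pos k h, partialT_pos k h, map_sub]
  · rw [partialT_neg k h, partialT_neg k h, partialT_neg k h, sub_zero]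

lemma partialT_sum {ι : Type*} (t : Finset ι) (g : ι → PP) (k : ℕ) :
    partialT k (∑ i ∈ t, g i) = ∑ i ∈ t, partialT k (g i) := by
  by_cases h : 0 < k
  · rw [partialT_pos k h, map_sum]
    exact Finset.sum_congr rfl fun i _ => (partialT_pos k h (g i)).symm
  · rw [partialT_neg k h]
    rw [Finset.sum_congr rfl fun i _ => partialT_neg k h (g i), Finset.sum_const, smul_zero]

lemma partialT_natCast_mul (k n : ℕ) (g : PP) :
    partialT k ((n : PP) * g) = (n : PP) * partialT k g := by
  by_cases h : 0 < k
  · rw [partialT_pos k h, partialT_pos k h, natCast_eq_C, pderiv_mul, pderiv_C, zero_mul,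
      zero_add]
  · rw [partialT_neg k h, partialT_neg k h, mul_zero]

lemma partialT_comm (i j : ℕ) (f : PP) :
    partialT i (partialT j f) = partialT j (partialT i f) := by
  by_cases hi : 0 < i <;> by_cases hj : 0 < j
  · rw [partialT_pos i hi, partialT_pos j hj, partialT_pos j hj, partialT_pos i hi]
    exact pderiv_comm' _ _ f
  · rw [partialT_neg j hj, partialT_neg j hj, partialT_map_zero]
  · rw [partialT_neg i hi, partialT_neg i hi, partialT_map_zero]
  · rw [partialT_neg i hi, partialT_neg j hj]

lemma partialT_X_mul (k : ℕ) (n : ℕ+) (g : PP) :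
    partialT k (X n * g) = (if ((n : ℕ) = k) then g else 0) + X n * partialT k g := by
  by_cases h1 : 0 < k
  · rw [partialT_pos k h1, partialT_pos k h1, pderiv_mul]
    by_cases h2 : (n : ℕ) = k
    · have hn : n = k.toPNat h1 := by
        apply PNat.coe_injective
        rw [coe_toPNat, h2]
      rw [if_pos h2, hn, pderiv_X_self, one_mul]
    · have hne : n ≠ k.toPNat h1 := fun hh => h2 (by rw [hh, coe_toPNat])
      rw [if_neg h2, pderiv_X_of_ne hne, zero_mul, zero_add]
  · rw [partialT_neg k h1, partialT_neg k h1, if_neg (by have := n.pos; omega : ¬ ((n : ℕ) = k)),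
      mul_zero, add_zero]

end Stmt16Aux

open Stmt16Aux

/-- The operators `L_k` satisfy the (half of the) Virasoro/Witt algebra:
`[L_a, L_b] = (b - a)·L_{a+b}`. -/
theorem stmt_16 (a b : ℕ) (f : MvPolynomial ℕ+ ℝ) :
    virasoroL a (virasoroL b f) - virasoroL b (virasoroL a f)
      = ((b : ℝ) - (a : ℝ)) • virasoroL (a + b) f := by
  classical
  set N : ℕ := f.vars.sup (fun i => (i : ℕ)) with hN
  set s : Finset ℕ+ := Finset.map
    ⟨fun i : ℕ => (⟨i + 1, Nat.succ_pos i⟩ : ℕ+),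
      fun x y h => by simpa using congrArg (fun p : ℕ+ => (p : ℕ)) h⟩
    (Finset.range N) with hs
  have hmem : ∀ n : ℕ+, n ∈ s ↔ (n : ℕ) ≤ N := by
    intro n
    simp only [hs, Finset.mem_map, Finset.mem_range, Function.Embedding.coeFn_mk]
    constructor
    · rintro ⟨i, hi, rfl⟩; exact hi
    · intro h
      have hp := n.pos
      refine ⟨(n : ℕ) - 1, by omega, ?_⟩
      apply PNat.coe_injective
      show (n : ℕ) - 1 + 1 = (n : ℕ)
      omega
  have hvan : ∀ k : ℕ, N < k → partialT k f = 0 := by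
    intro k hk
    have hk0 : 0 < k := lt_of_le_of_lt (Nat.zero_le N) hk
    rw [partialT_pos k hk0]
    apply pderiv_eq_zero_of_notMem_vars
    intro hmemv
    have h1 : ((k.toPNat hk0 : ℕ+) : ℕ) ≤ N :=
      Finset.le_sup (f := fun i : ℕ+ => (i : ℕ)) hmemv
    rw [coe_toPNat] at h1
    omega
  have hgt : ∀ n : ℕ+, n ∉ s → N < (n : ℕ) := by
    intro n hn
    by_contra h
    exact hn ((hmem n).mpr (by omega))
  have hD : ∀ (k : ℕ) (n : ℕ+), n ∉ s → partialT ((n : ℕ) + k) f = 0 := by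
    intro k n hn
    exact hvan _ (lt_of_lt_of_le (hgt n hn) (Nat.le_add_right _ _))
  have L_rep : ∀ (k : ℕ) (g : PP), (∀ n : ℕ+, n ∉ s → partialT ((n : ℕ) + k) g = 0) →
      virasoroL k g = partialT k g
        - ∑ n ∈ s, ((n : ℕ) : PP) * X n * partialT ((n : ℕ) + k) g := by
    intro k g h
    unfold virasoroL
    congr 1
    apply finsum_eq_sum_of_support_subset
    intro n hn
    by_contra hns
    apply hn
    simp [h n hns]
  have delta : ∀ (K k : ℕ),
      (∑ m ∈ s, ((m : ℕ) : PP) * (if (m : ℕ) = K then partialT ((m : ℕ) + k) f else 0))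
        = (K : PP) * partialT (K + k) f := by
    intro K k
    have step : ∀ m ∈ s,
        ((m : ℕ) : PP) * (if (m : ℕ) = K then partialT ((m : ℕ) + k) f else 0)
          = if (m : ℕ) = K then (K : PP) * partialT (K + k) f else 0 := by
      intro m _
      split_ifs with h
      · rw [h]
      · rw [mul_zero]
    rw [Finset.sum_congr rfl step]
    by_cases hK : 1 ≤ K ∧ K ≤ N
    · have hK0 : 0 < K := hK.1
      have hcond : ∀ m : ℕ+, ((m : ℕ) = K) = (m = K.toPNat hK0) := by
        intro m
        apply propext
        constructor
        · intro h; apply PNat.coe_injective; rw [coe_toPNat, h]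
        · intro h; rw [h, coe_toPNat]
      simp only [hcond]
      rw [Finset.sum_ite_eq' s (K.toPNat hK0) (fun _ => (K : PP) * partialT (K + k) f)]
      rw [if_pos ((hmem _).mpr (by rw [coe_toPNat]; exact hK.2))]
    · have hz : (∑ m ∈ s, if (m : ℕ) = K then (K : PP) * partialT (K + k) f else 0) = 0 := by
        apply Finset.sum_eq_zero
        intro m hm
        have hmN : (m : ℕ) ≤ N := (hmem m).mp hm
        have := m.pos
        rw [if_neg (by omega)]
      rw [hz]
      rcases Nat.eq_zero_or_pos K with h0 | h0
      · simp [h0]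
      · rw [hvan (K + k) (by omega), mul_zero]
  have pd_S : ∀ (K k : ℕ),
      partialT K (∑ m ∈ s, ((m : ℕ) : PP) * X m * partialT ((m : ℕ) + k) f)
        = (K : PP) * partialT (K + k) f
          + ∑ m ∈ s, ((m : ℕ) : PP) * X m * partialT K (partialT ((m : ℕ) + k) f) := by
    intro K k
    rw [partialT_sum]
    have step : ∀ m ∈ s,
        partialT K (((m : ℕ) : PP) * X m * partialT ((m : ℕ) + k) f)
          = ((m : ℕ) : PP) * (if (m : ℕ) = K then partialT ((m : ℕ) + k) f else 0)
            + ((m : ℕ) : PP) * X m * partialT K (partialT ((m : ℕ) + k) f) := by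
      intro m _
      rw [mul_assoc, partialT_natCast_mul, partialT_X_mul, mul_add, mul_assoc]
    rw [Finset.sum_congr rfl step, Finset.sum_add_distrib, delta K k]
  have hvL : ∀ (x y : ℕ) (n : ℕ+), n ∉ s →
      partialT ((n : ℕ) + x) (virasoroL y f) = 0 := by
    intro x y n hn
    rw [L_rep y f (hD y), partialT_sub, pd_S ((n : ℕ) + x) y]
    have h1 : partialT ((n : ℕ) + x) (partialT y f) = 0 := by
      rw [partialT_comm, hD x n hn, partialT_map_zero]
    have h2 : partialT (((n : ℕ) + x) + y) f = 0 :=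
      hvan _ (by have := hgt n hn; omega)
    rw [h1, h2, mul_zero, zero_add, Finset.sum_eq_zero, sub_zero]
    intro m _
    rw [partialT_comm, hD x n hn, partialT_map_zero, mul_zero]
  have hexp : ∀ x y : ℕ, virasoroL x (virasoroL y f) =
      partialT x (partialT y f)
      - (x : PP) * partialT (x + y) f
      - (∑ m ∈ s, ((m : ℕ) : PP) * X m * partialT x (partialT ((m : ℕ) + y) f))
      - (∑ n ∈ s, ((n : ℕ) : PP) * X n * partialT ((n : ℕ) + x) (partialT y f))
      + (∑ n ∈ s, (((n : ℕ) : PP) + (x : PP)) *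
          (((n : ℕ) : PP) * X n * partialT ((n : ℕ) + (x + y)) f))
      + (∑ n ∈ s, ∑ m ∈ s, ((n : ℕ) : PP) * X n *
          (((m : ℕ) : PP) * X m * partialT ((n : ℕ) + x) (partialT ((m : ℕ) + y) f))) := by
    intro x y
    rw [L_rep x (virasoroL y f) (hvL x y), L_rep y f (hD y)]
    rw [partialT_sub, pd_S x y]
    have e1 : ∀ n ∈ s, ((n : ℕ) : PP) * X n *
        partialT ((n : ℕ) + x)
          (partialT y f - ∑ m ∈ s, ((m : ℕ) : PP) * X m * partialT ((m : ℕ) + y) f)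
        = ((n : ℕ) : PP) * X n * partialT ((n : ℕ) + x) (partialT y f)
          - (((n : ℕ) : PP) + (x : PP)) *
              (((n : ℕ) : PP) * X n * partialT ((n : ℕ) + (x + y)) f)
          - ∑ m ∈ s, ((n : ℕ) : PP) * X n *
              (((m : ℕ) : PP) * X m * partialT ((n : ℕ) + x) (partialT ((m : ℕ) + y) f)) := by
      intro n _
      rw [partialT_sub, pd_S ((n : ℕ) + x) y, mul_sub, mul_add, Finset.mul_sum]
      have hcast : ((((n : ℕ) + x : ℕ)) : PP) = ((n : ℕ) : PP) + (x : PP) := by push_cast; ring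
      have hexpn : ((n : ℕ) + x) + y = (n : ℕ) + (x + y) := by omega
      rw [hcast, hexpn]
      ring
    rw [Finset.sum_congr rfl e1]
    rw [Finset.sum_sub_distrib, Finset.sum_sub_distrib]
    ring
  rw [hexp a b, hexp b a, L_rep (a + b) f (hD (a + b))]
  simp only [Nat.add_comm b a]
  have hDD : partialT a (partialT b f) = partialT b (partialT a f) := partialT_comm a b f
  have h1 : (∑ n ∈ s, ((n : ℕ) : PP) * X n * partialT ((n : ℕ) + a) (partialT b f))
      = ∑ m ∈ s, ((m : ℕ) : PP) * X m * partialT b (partialT ((m : ℕ) + a) f) :=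
    Finset.sum_congr rfl fun n _ => by rw [partialT_comm]
  have h2 : (∑ n ∈ s, ((n : ℕ) : PP) * X n * partialT ((n : ℕ) + b) (partialT a f))
      = ∑ m ∈ s, ((m : ℕ) : PP) * X m * partialT a (partialT ((m : ℕ) + b) f) :=
    Finset.sum_congr rfl fun n _ => by rw [partialT_comm]
  have hT : (∑ n ∈ s, ∑ m ∈ s, ((n : ℕ) : PP) * X n *
        (((m : ℕ) : PP) * X m * partialT ((n : ℕ) + a) (partialT ((m : ℕ) + b) f)))
      = ∑ n ∈ s, ∑ m ∈ s, ((n : ℕ) : PP) * X n *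
        (((m : ℕ) : PP) * X m * partialT ((n : ℕ) + b) (partialT ((m : ℕ) + a) f)) := by
    rw [Finset.sum_comm]
    refine Finset.sum_congr rfl fun n _ => Finset.sum_congr rfl fun m _ => ?_
    rw [partialT_comm]
    ring
  have hc3 : (∑ n ∈ s, (((n : ℕ) : PP) + (b : PP)) *
        (((n : ℕ) : PP) * X n * partialT ((n : ℕ) + (a + b)) f))
      - ∑ n ∈ s, (((n : ℕ) : PP) + (a : PP)) *
        (((n : ℕ) : PP) * X n * partialT ((n : ℕ) + (a + b)) f)
      = ((b : PP) - (a : PP)) *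
          ∑ n ∈ s, ((n : ℕ) : PP) * X n * partialT ((n : ℕ) + (a + b)) f := by
    rw [← Finset.sum_sub_distrib, Finset.mul_sum]
    exact Finset.sum_congr rfl fun n _ => by ring
  have hsmul : ∀ p : PP, ((b : ℝ) - (a : ℝ)) • p = ((b : PP) - (a : PP)) * p := by
    intro p
    rw [smul_eq_C_mul, map_sub, natCast_eq_C, natCast_eq_C]
  rw [hsmul]
  linear_combination hDD - h1 + h2 + hT - hc3
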